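/- Let 0 < α < 1, let β = √(1 − α²), let k be a natural number, and let m₁, …, m_k be real numbers with m_j ≥ 2 for all j. Then ∏_{j=1}^{k} (α^{2m_j} + β^{2m_j}) ≤ (α⁴ + β⁴)^{(∑_{j=1}^{k} m_j)/2}. -/
import Mathlib

/-- Let `0 < α < 1`, `β = √(1 − α²)`, `k : ℕ`, and let `m₁, …, m_k` be reals
with `m_j ≥ 2` for all `j`. Then `∏_j (α^(2 m_j) + β^(2 m_j)) ≤ (α⁴ + β⁴)^((∑_j m_j)/2)`,
where powers with real exponents are `Real.rpow`. -/
lemma aux_add_rpow {x y p : ℝ} (hx : 0 ≤ x) (hy : 0 ≤ y) (hp : 1 ≤ p) :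
    x ^ p + y ^ p ≤ (x + y) ^ p := by
  have h := NNReal.add_rpow_le_rpow_add x.toNNReal y.toNNReal hp
  rw [← Real.coe_toNNReal x hx, ← Real.coe_toNNReal y hy]
  exact_mod_cast h

theorem stmt5 (α β : ℝ) (hα0 : 0 < α) (hα1 : α < 1)
    (hβ : β = Real.sqrt (1 - α ^ 2)) (k : ℕ) (m : Fin k → ℝ) (hm : ∀ j, 2 ≤ m j) :
    ∏ j : Fin k, (α ^ (2 * m j) + β ^ (2 * m j))
      ≤ (α ^ 4 + β ^ 4) ^ ((∑ j : Fin k, m j) / 2) := by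
  have hβ0 : 0 ≤ β := hβ ▸ Real.sqrt_nonneg _
  have hsum : (α ^ 4 + β ^ 4) > 0 := by positivity
  have key : ∀ j, α ^ (2 * m j) + β ^ (2 * m j) ≤ (α ^ 4 + β ^ 4) ^ (m j / 2) := by
    intro j
    have h1 : α ^ (2 * m j) = (α ^ 4) ^ (m j / 2) := by
      rw [← Real.rpow_natCast α 4, ← Real.rpow_mul hα0.le]
      norm_num; ring_nf
    have h2 : β ^ (2 * m j) = (β ^ 4) ^ (m j / 2) := by
      rw [← Real.rpow_natCast β 4, ← Real.rpow_mul hβ0]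
      norm_num; ring_nf
    rw [h1, h2]
    exact aux_add_rpow (by positivity) (by positivity) (by linarith [hm j])
  calc ∏ j : Fin k, (α ^ (2 * m j) + β ^ (2 * m j))
      ≤ ∏ j : Fin k, (α ^ 4 + β ^ 4) ^ (m j / 2) := by
        refine Finset.prod_le_prod (fun j _ => by positivity) (fun j _ => key j)
    _ = (α ^ 4 + β ^ 4) ^ ((∑ j : Fin k, m j) / 2) := by
        rw [Finset.sum_div, Real.rpow_sum_of_pos hsum]
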